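/- There exists C > 0 such that for every κ > 0, every τ ∈ (0, 1), and every solution (u, λ) of the ergodic equation E(κ, a) with a = 1 − τ/κ and density m: (i) 0 ≤ λ ≤ C τ; (ii) |m(x) − 1/(2π)| ≤ 2 √(C τ) for all x ∈ [−π, π]; and (iii) there exists τ₁ ∈ (0, 1) such that if moreover τ ≤ τ₁ then |u'(x)| ≤ C τ for all x ∈ [−π, π]. -/

import Mathlib

open Real

/-- `V x = 1 - cos x`. -/
noncomputable def Vfun (x : ℝ) : ℝ := 1 - Real.cos x

/-- The pair `(u, lam)` solves the ergodic equation `E(κ, a)`: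
`u` is `C²` and even, `u 0 = 0`, `u'(±π) = 0`, and
`-u'' + (1/2)|u'|² + lam = κ V(x)(1 - a)` on `[-π, π]`. -/
def SolvesE (κ a : ℝ) (u : ℝ → ℝ) (lam : ℝ) : Prop :=
  ContDiff ℝ 2 u ∧ (∀ x : ℝ, u (-x) = u x) ∧ u 0 = 0 ∧
  deriv u π = 0 ∧ deriv u (-π) = 0 ∧
  ∀ x ∈ Set.Icc (-π) π,
    -(deriv (deriv u) x) + (1 / 2) * (deriv u x) ^ 2 + lam = κ * Vfun x * (1 - a)

/-- The density associated to `u`. -/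
noncomputable def dens (u : ℝ → ℝ) (x : ℝ) : ℝ :=
  Real.exp (-u x) / ∫ y in (-π)..π, Real.exp (-u y)

/-- The pair `(v, lam')` solves the linearized equation `L(κ, a)` along `(u, lam)`:
`v` is `C²`, `v 0 = 0`, `v'(±π) = 0`, and `-v'' + u' v' + lam' = -κ V(x)` on `[-π, π]`. -/
def SolvesL (κ : ℝ) (u v : ℝ → ℝ) (lam' : ℝ) : Prop :=
  ContDiff ℝ 2 v ∧ v 0 = 0 ∧ deriv v π = 0 ∧ deriv v (-π) = 0 ∧
  ∀ x ∈ Set.Icc (-π) π,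
    -(deriv (deriv v) x) + deriv u x * deriv v x + lam' = -(κ * Vfun x)

/-- Estimates for the ergodic problem with `a = 1 - τ/κ`: bounds on the ergodic
constant, closeness of the density to the uniform one, and (for small `τ`)
smallness of `u'`. -/
noncomputable def wfun (u : ℝ → ℝ) (x : ℝ) : ℝ := Real.exp (-(u x)/2)

namespace EstAux

lemma hle : -π ≤ π := by linarith [Real.pi_pos]

lemma V_nonneg (x : ℝ) : 0 ≤ Vfun x := by
  simp only [Vfun, sub_nonneg]; exact Real.cos_le_one x

lemma V_le_two (x : ℝ) : Vfun x ≤ 2 := by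
  simp only [Vfun]; linarith [Real.neg_one_le_cos x]

lemma intV : (∫ x in (-π)..π, Vfun x) = 2 * π := by
  simp only [Vfun]
  rw [intervalIntegral.integral_sub intervalIntegrable_const
    (Real.continuous_cos.intervalIntegrable _ _)]
  simp [Real.sin_pi]
  ring

variable {u : ℝ → ℝ} (hu : ContDiff ℝ 2 u)

lemma hud (hu : ContDiff ℝ 2 u) : Differentiable ℝ u := hu.differentiable (by norm_num)

lemma hu'd (hu : ContDiff ℝ 2 u) : Differentiable ℝ (deriv u) :=
  ((contDiff_succ_iff_deriv.mp
    (show ContDiff ℝ ((1:WithTop ℕ∞)+1) u by rw [one_add_one_eq_two]; exact hu)).2.2).differentiable one_ne_zero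

lemma hcu'' (hu : ContDiff ℝ 2 u) : Continuous (deriv (deriv u)) :=
  ((contDiff_succ_iff_deriv.mp
    (show ContDiff ℝ ((1:WithTop ℕ∞)+1) u by rw [one_add_one_eq_two]; exact hu)).2.2).continuous_deriv le_rfl

lemma hcu' (hu : ContDiff ℝ 2 u) : Continuous (deriv u) := (hu'd hu).continuous

lemma wpos (u : ℝ → ℝ) (x : ℝ) : 0 < wfun u x := Real.exp_pos _

lemma hw_hasDeriv (hu : ContDiff ℝ 2 u) (x : ℝ) :
    HasDerivAt (wfun u) ((-(deriv u x)/2) * wfun u x) x := by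
  have h1 : HasDerivAt (fun y => -(u y)/2) (-(deriv u x)/2) x :=
    (((hud hu) x).hasDerivAt.neg).div_const 2
  have h2 := h1.exp
  exact h2.congr_deriv (by simp only [wfun]; ring)

lemma hw_cont (hu : ContDiff ℝ 2 u) : Continuous (wfun u) := by
  exact (((hu.continuous.neg).div_const 2)).rexp

lemma hderivw_eq (hu : ContDiff ℝ 2 u) :
    deriv (wfun u) = fun x => (-(deriv u x)/2) * wfun u x :=
  funext fun x => (hw_hasDeriv hu x).deriv

lemma hw2 (hu : ContDiff ℝ 2 u) (x : ℝ) :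
    HasDerivAt (deriv (wfun u))
      ((-(deriv (deriv u) x)/2 + (deriv u x)^2/4) * wfun u x) x := by
  rw [hderivw_eq hu]
  have h1 : HasDerivAt (fun y => -(deriv u y)/2) (-(deriv (deriv u) x)/2) x :=
    (((hu'd hu) x).hasDerivAt.neg).div_const 2
  have h3 := h1.mul (hw_hasDeriv hu x)
  exact h3.congr_deriv (by ring)

lemma hw2_cont (hu : ContDiff ℝ 2 u) :
    Continuous (fun x => (-(deriv (deriv u) x)/2 + (deriv u x)^2/4) * wfun u x) := by
  exact ((((hcu'' hu).neg.div_const 2).add (((hcu' hu).pow 2).div_const 4)).mul (hw_cont hu))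

end EstAux

namespace EstAux2
open EstAux

variable {u : ℝ → ℝ} {τ lam : ℝ}

/-- Integrating the equation over `[-π, π]`. -/
lemma key_identity (hu : ContDiff ℝ 2 u)
    (hupi : deriv u π = 0) (hunpi : deriv u (-π) = 0)
    (heq : ∀ x ∈ Set.Icc (-π) π,
      -(deriv (deriv u) x) + (1/2) * (deriv u x)^2 + lam = τ * Vfun x) :
    (1/2) * (∫ x in (-π)..π, (deriv u x)^2) + 2*π*lam = 2*π*τ := by
  have hInt : (∫ x in (-π)..π, (-(deriv (deriv u) x) + (1/2) * (deriv u x)^2 + lam))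
      = ∫ x in (-π)..π, τ * Vfun x := by
    apply intervalIntegral.integral_congr
    intro x hx
    exact heq x (by rwa [Set.uIcc_of_le hle] at hx)
  have h1 : IntervalIntegrable (fun x => -(deriv (deriv u) x)) MeasureTheory.volume (-π) π :=
    ((hcu'' hu).neg).intervalIntegrable _ _
  have h2 : IntervalIntegrable (fun x => (1/2) * (deriv u x)^2) MeasureTheory.volume (-π) π :=
    (continuous_const.mul ((hcu' hu).pow 2)).intervalIntegrable _ _
  have h3 : IntervalIntegrable (fun _ : ℝ => lam) MeasureTheory.volume (-π) π :=
    intervalIntegrable_const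
  have hIu'' : (∫ x in (-π)..π, deriv (deriv u) x) = 0 := by
    rw [intervalIntegral.integral_deriv_eq_sub (fun x _ => (hu'd hu) x)
      ((hcu'' hu).intervalIntegrable _ _), hupi, hunpi]
    ring
  rw [intervalIntegral.integral_add (h1.add h2) h3,
      intervalIntegral.integral_add h1 h2,
      intervalIntegral.integral_neg, hIu'',
      intervalIntegral.integral_const_mul,
      intervalIntegral.integral_const,
      intervalIntegral.integral_const_mul, intV] at hInt
  simp at hInt
  linarith [hInt]

end EstAux2

namespace EstAux3
open EstAux

variable {u : ℝ → ℝ} {τ lam : ℝ}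

lemma w_second_deriv_eq (hu : ContDiff ℝ 2 u)
    (heq : ∀ x ∈ Set.Icc (-π) π,
      -(deriv (deriv u) x) + (1/2) * (deriv u x)^2 + lam = τ * Vfun x) :
    ∀ x ∈ Set.Icc (-π) π,
      (-(deriv (deriv u) x)/2 + (deriv u x)^2/4) * wfun u x
        = ((τ * Vfun x - lam)/2) * wfun u x := by
  intro x hx
  have h := heq x hx
  have : -(deriv (deriv u) x)/2 + (deriv u x)^2/4 = (τ * Vfun x - lam)/2 := by linarith
  rw [this]

lemma lam_nonneg (hu : ContDiff ℝ 2 u) (hτ0 : 0 < τ)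
    (hupi : deriv u π = 0) (hunpi : deriv u (-π) = 0)
    (heq : ∀ x ∈ Set.Icc (-π) π,
      -(deriv (deriv u) x) + (1/2) * (deriv u x)^2 + lam = τ * Vfun x) :
    0 ≤ lam := by
  have hdwpi : deriv (wfun u) π = 0 := by rw [hderivw_eq hu]; simp [hupi]
  have hdwnpi : deriv (wfun u) (-π) = 0 := by rw [hderivw_eq hu]; simp [hunpi]
  have hftc : (∫ x in (-π)..π, (-(deriv (deriv u) x)/2 + (deriv u x)^2/4) * wfun u x)
      = deriv (wfun u) π - deriv (wfun u) (-π) :=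
    intervalIntegral.integral_eq_sub_of_hasDerivAt (fun x _ => hw2 hu x)
      ((hw2_cont hu).intervalIntegrable _ _)
  rw [hdwpi, hdwnpi, sub_zero] at hftc
  have hcongr : (∫ x in (-π)..π, (-(deriv (deriv u) x)/2 + (deriv u x)^2/4) * wfun u x)
      = ∫ x in (-π)..π, ((τ * Vfun x - lam)/2) * wfun u x := by
    apply intervalIntegral.integral_congr
    intro x hx
    exact w_second_deriv_eq hu heq x (by rwa [Set.uIcc_of_le hle] at hx)
  rw [hcongr] at hftc
  -- split: ((τ V - lam)/2) w = (τ/2) * (V*w) - (lam/2) * w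
  have hsplit : (∫ x in (-π)..π, ((τ * Vfun x - lam)/2) * wfun u x)
      = (τ/2) * (∫ x in (-π)..π, Vfun x * wfun u x)
        - (lam/2) * (∫ x in (-π)..π, wfun u x) := by
    rw [← intervalIntegral.integral_const_mul, ← intervalIntegral.integral_const_mul,
        ← intervalIntegral.integral_sub]
    · apply intervalIntegral.integral_congr; intro x _; ring
    · exact (continuous_const.mul (((continuous_const.sub Real.continuous_cos)).mul (hw_cont hu))).intervalIntegrable _ _
    · exact (continuous_const.mul (hw_cont hu)).intervalIntegrable _ _
  rw [hsplit] at hftc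
  have hIw : 0 < ∫ x in (-π)..π, wfun u x :=
    intervalIntegral.intervalIntegral_pos_of_pos_on ((hw_cont hu).intervalIntegrable _ _)
      (fun x _ => wpos u x) (by linarith [Real.pi_pos])
  have hIVw : 0 ≤ ∫ x in (-π)..π, Vfun x * wfun u x :=
    intervalIntegral.integral_nonneg hle
      (fun x _ => mul_nonneg (V_nonneg x) (wpos u x).le)
  by_contra hneg
  push_neg at hneg
  have : (lam/2) * (∫ x in (-π)..π, wfun u x) < 0 :=
    mul_neg_of_neg_of_pos (by linarith) hIw
  nlinarith

end EstAux3

namespace EstAux4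
open EstAux

variable {u : ℝ → ℝ} {τ lam : ℝ}

lemma u_bound (hu : ContDiff ℝ 2 u) (hτ0 : 0 < τ)
    (heven : ∀ x : ℝ, u (-x) = u x) (hu0 : u 0 = 0)
    (hJ : (∫ x in (-π)..π, (deriv u x)^2) ≤ 4*π*τ) :
    ∀ x ∈ Set.Icc (-π) π, |u x| ≤ 3*π*Real.sqrt τ := by
  set ε := Real.sqrt τ with hεdef
  have hε : 0 < ε := Real.sqrt_pos.mpr hτ0
  have hε2 : ε^2 = τ := Real.sq_sqrt hτ0.le
  set g : ℝ → ℝ := fun y => (deriv u y)^2/(2*ε) + ε/2 with hgdef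
  have hgc : Continuous g := (((hcu' hu).pow 2).div_const _).add continuous_const
  have habs : ∀ y, |deriv u y| ≤ g y := by
    intro y
    have key : |deriv u y| * (2*ε) ≤ (deriv u y)^2 + ε^2 := by
      nlinarith [sq_nonneg (|deriv u y| - ε), sq_abs (deriv u y)]
    have h1 : |deriv u y| ≤ ((deriv u y)^2 + ε^2)/(2*ε) := by
      rw [le_div_iff₀ (by linarith)]; linarith
    have h2 : ((deriv u y)^2 + ε^2)/(2*ε) = g y := by
      simp only [hgdef]; field_simp
    linarith [h2 ▸ h1]
  have hIg : (∫ y in (-π)..π, g y) ≤ 3*π*ε := by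
    have : (∫ y in (-π)..π, g y)
        = (∫ y in (-π)..π, (deriv u y)^2)/(2*ε) + (π - -π) * (ε/2) := by
      simp only [hgdef]
      rw [intervalIntegral.integral_add (f := fun y => deriv u y ^ 2 / (2*ε))
        ((((hcu' hu).pow 2).div_const _).intervalIntegrable _ _) intervalIntegrable_const,
        intervalIntegral.integral_div, intervalIntegral.integral_const, smul_eq_mul]
    rw [this]
    have h1 : (∫ y in (-π)..π, (deriv u y)^2)/(2*ε) ≤ (4*π*τ)/(2*ε) :=
      div_le_div_of_nonneg_right hJ (by linarith) |>.trans_eq rfl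
    have h2 : (4*π*τ)/(2*ε) = 2*π*ε := by
      rw [← hε2]; field_simp; ring
    nlinarith [Real.pi_pos]
  -- first handle x ∈ [0, π]
  have hhalf : ∀ x ∈ Set.Icc (0:ℝ) π, |u x| ≤ 3*π*ε := by
    intro x hx
    have hftc : (∫ y in (0:ℝ)..x, deriv u y) = u x - u 0 :=
      intervalIntegral.integral_deriv_eq_sub (fun y _ => (hud hu) y)
        (((hcu' hu)).intervalIntegrable _ _)
    have h1 : |u x| = |∫ y in (0:ℝ)..x, deriv u y| := by rw [hftc, hu0, sub_zero]
    have h2 : |∫ y in (0:ℝ)..x, deriv u y| ≤ ∫ y in (0:ℝ)..x, |deriv u y| := by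
      simpa [Real.norm_eq_abs] using
        intervalIntegral.norm_integral_le_integral_norm (f := fun y => deriv u y) hx.1
    have h3 : (∫ y in (0:ℝ)..x, |deriv u y|) ≤ ∫ y in (0:ℝ)..x, g y :=
      intervalIntegral.integral_mono_on hx.1
        (((hcu' hu).abs).intervalIntegrable _ _) (hgc.intervalIntegrable _ _)
        (fun y _ => habs y)
    have h4 : (∫ y in (0:ℝ)..x, g y) ≤ ∫ y in (-π)..π, g y := by
      apply intervalIntegral.integral_mono_interval (by linarith [Real.pi_pos]) hx.1 hx.2
      · apply Filter.Eventually.of_forall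
        intro y
        simp only [Pi.zero_apply, hgdef]
        positivity
      · exact hgc.intervalIntegrable _ _
    linarith
  intro x hx
  rcases le_or_gt 0 x with h0 | h0
  · exact hhalf x ⟨h0, hx.2⟩
  · have := hhalf (-x) ⟨by linarith, by linarith [hx.1]⟩
    rwa [heven x] at this

end EstAux4

namespace EstAux5
open EstAux

variable {u : ℝ → ℝ} {M : ℝ}

lemma dens_bound (hc : Continuous u) (hM0 : 0 ≤ M)
    (hM : ∀ x ∈ Set.Icc (-π) π, |u x| ≤ M) :
    ∀ x ∈ Set.Icc (-π) π,
      |dens u x - 1/(2*π)| ≤ (Real.exp (2*M) - 1)/(2*π) := by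
  have hci : Continuous (fun y => Real.exp (-u y)) := (hc.neg).rexp
  have hIlow : 2*π*Real.exp (-M) ≤ ∫ y in (-π)..π, Real.exp (-u y) := by
    have := intervalIntegral.integral_mono_on (μ := MeasureTheory.volume)
      (f := fun _ : ℝ => Real.exp (-M))
      (g := fun y => Real.exp (-u y)) hle intervalIntegrable_const
      (hci.intervalIntegrable _ _)
      (fun y hy => Real.exp_le_exp.mpr (by have := hM y hy; rw [abs_le] at this; linarith))
    rw [intervalIntegral.integral_const, smul_eq_mul] at this
    calc 2*π*Real.exp (-M) = (π - -π) * Real.exp (-M) := by ring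
    _ ≤ _ := this
  have hIhigh : (∫ y in (-π)..π, Real.exp (-u y)) ≤ 2*π*Real.exp M := by
    have := intervalIntegral.integral_mono_on (μ := MeasureTheory.volume)
      (f := fun y => Real.exp (-u y))
      (g := fun _ : ℝ => Real.exp M) hle (hci.intervalIntegrable _ _)
      intervalIntegrable_const
      (fun y hy => Real.exp_le_exp.mpr (by have := hM y hy; rw [abs_le] at this; linarith))
    rw [intervalIntegral.integral_const, smul_eq_mul] at this
    calc (∫ y in (-π)..π, Real.exp (-u y)) ≤ (π - -π) * Real.exp M := this
    _ = 2*π*Real.exp M := by ring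
  have hπ : 0 < π := Real.pi_pos
  have hIpos : 0 < ∫ y in (-π)..π, Real.exp (-u y) := by
    calc (0:ℝ) < 2*π*Real.exp (-M) := by positivity
    _ ≤ _ := hIlow
  intro x hx
  have hex_low : Real.exp (-M) ≤ Real.exp (-u x) :=
    Real.exp_le_exp.mpr (by have := hM x hx; rw [abs_le] at this; linarith)
  have hex_high : Real.exp (-u x) ≤ Real.exp M :=
    Real.exp_le_exp.mpr (by have := hM x hx; rw [abs_le] at this; linarith)
  have hup : dens u x ≤ Real.exp (2*M)/(2*π) := by
    have h1 : dens u x ≤ Real.exp M / (2*π*Real.exp (-M)) :=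
      div_le_div₀ (Real.exp_pos M).le hex_high (by positivity) hIlow
    have h2 : Real.exp M / (2*π*Real.exp (-M)) = Real.exp (2*M)/(2*π) := by
      rw [Real.exp_neg]
      rw [show (2:ℝ)*M = M + M by ring, Real.exp_add]
      field_simp
    linarith [h2 ▸ h1]
  have hlo : Real.exp (-(2*M))/(2*π) ≤ dens u x := by
    have h1 : Real.exp (-M) / (2*π*Real.exp M) ≤ dens u x :=
      div_le_div₀ (Real.exp_pos (-u x)).le hex_low (by positivity) hIhigh
    have h2 : Real.exp (-M) / (2*π*Real.exp M) = Real.exp (-(2*M))/(2*π) := by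
      rw [show -(2*M) = -M - M by ring, Real.exp_sub, Real.exp_neg M]
      field_simp
    linarith [h2 ▸ h1]
  have hsum : 2 ≤ Real.exp (2*M) + Real.exp (-(2*M)) := by
    rw [Real.exp_neg (2*M)]
    have ha := Real.exp_pos (2*M)
    have h1 : Real.exp (2*M) * (Real.exp (2*M))⁻¹ = 1 := by field_simp
    nlinarith [sq_nonneg (Real.exp (2*M) - 1)]
  rw [abs_le]
  constructor
  · have h4 : (1 - Real.exp (2*M))/(2*π) ≤ (Real.exp (-(2*M)) - 1)/(2*π) :=
      div_le_div_of_nonneg_right (by linarith) (by positivity)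
    have h5 : (Real.exp (-(2*M)) - 1)/(2*π) ≤ dens u x - 1/(2*π) := by
      rw [sub_div]; linarith
    have h3 : -((Real.exp (2*M) - 1)/(2*π)) = (1 - Real.exp (2*M))/(2*π) := by ring
    linarith
  · have h := sub_le_sub_right hup (1/(2*π))
    calc dens u x - 1/(2*π) ≤ Real.exp (2*M)/(2*π) - 1/(2*π) := h
    _ = (Real.exp (2*M) - 1)/(2*π) := by ring

end EstAux5

namespace EstAux6
open EstAux EstAux3

variable {u : ℝ → ℝ} {τ lam : ℝ}

lemma exp_half_lt_two : Real.exp (1/2 : ℝ) < 2 := by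
  have h := Real.exp_one_lt_d9
  have h2 : Real.exp (1/2 : ℝ) * Real.exp (1/2 : ℝ) = Real.exp 1 := by
    rw [← Real.exp_add]; norm_num
  nlinarith [Real.exp_pos (1/2 : ℝ)]

lemma grad_bound (hu : ContDiff ℝ 2 u) (hτ0 : 0 < τ)
    (hlam0 : 0 ≤ lam) (hlamτ : lam ≤ τ)
    (hupi : deriv u π = 0) (hunpi : deriv u (-π) = 0)
    (heq : ∀ x ∈ Set.Icc (-π) π,
      -(deriv (deriv u) x) + (1/2) * (deriv u x)^2 + lam = τ * Vfun x)
    (hM : ∀ x ∈ Set.Icc (-π) π, |u x| ≤ 1) :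
    ∀ x ∈ Set.Icc (-π) π, |deriv u x| ≤ 16*π*τ := by
  have hπ : 0 < π := Real.pi_pos
  have hwlb : ∀ x ∈ Set.Icc (-π) π, 1/2 ≤ wfun u x := by
    intro x hx
    have h1 : -(u x)/2 ≥ -(1/2) := by
      have := hM x hx; rw [abs_le] at this; linarith
    calc (1/2 : ℝ) ≤ Real.exp (-(1/2)) := by
          rw [Real.exp_neg]
          have := inv_anti₀ (Real.exp_pos (1/2 : ℝ)) exp_half_lt_two.le
          norm_num at this ⊢
          exact this
    _ ≤ wfun u x := Real.exp_le_exp.mpr h1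
  have hwub : ∀ x ∈ Set.Icc (-π) π, wfun u x ≤ 2 := by
    intro x hx
    have h1 : -(u x)/2 ≤ 1/2 := by
      have := hM x hx; rw [abs_le] at this; linarith
    calc wfun u x ≤ Real.exp (1/2) := Real.exp_le_exp.mpr h1
    _ ≤ 2 := exp_half_lt_two.le
  -- bound on second derivative of w on Icc
  have hw''bd : ∀ y ∈ Set.Icc (-π) π,
      |(-(deriv (deriv u) y)/2 + (deriv u y)^2/4) * wfun u y| ≤ 2*τ := by
    intro y hy
    rw [w_second_deriv_eq hu heq y hy, abs_mul]
    have h1 : |(τ * Vfun y - lam)/2| ≤ τ := by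
      rw [abs_le]
      have hV1 := V_nonneg y; have hV2 := V_le_two y
      constructor <;> nlinarith
    have h2 : |wfun u y| ≤ 2 := by
      rw [abs_of_pos (wpos u y)]; exact hwub y hy
    calc |(τ * Vfun y - lam)/2| * |wfun u y| ≤ τ * 2 :=
      mul_le_mul h1 h2 (abs_nonneg _) hτ0.le
    _ = 2*τ := by ring
  intro x hx
  have hdwnpi : deriv (wfun u) (-π) = 0 := by rw [hderivw_eq hu]; simp [hunpi]
  have hftc : (∫ y in (-π)..x, (-(deriv (deriv u) y)/2 + (deriv u y)^2/4) * wfun u y)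
      = deriv (wfun u) x - deriv (wfun u) (-π) :=
    intervalIntegral.integral_eq_sub_of_hasDerivAt (fun y _ => hw2 hu y)
      ((hw2_cont hu).intervalIntegrable _ _)
  rw [hdwnpi, sub_zero] at hftc
  have hbd : |deriv (wfun u) x| ≤ 2*τ * |x - (-π)| := by
    rw [← hftc, ← Real.norm_eq_abs]
    apply intervalIntegral.norm_integral_le_of_norm_le_const
    intro y hy
    rw [Set.uIoc_of_le hx.1] at hy
    rw [Real.norm_eq_abs]
    exact hw''bd y ⟨hy.1.le, hy.2.trans hx.2⟩
  have hbd2 : |deriv (wfun u) x| ≤ 4*π*τ := by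
    have : |x - (-π)| ≤ 2*π := by
      rw [abs_le]; constructor <;> [linarith [hx.1]; linarith [hx.2]]
    nlinarith [abs_nonneg (deriv (wfun u) x)]
  -- recover deriv u
  have heq2 : deriv (wfun u) x = (-(deriv u x)/2) * wfun u x := by
    rw [hderivw_eq hu]
  have h3 : |deriv u x|/2 * (1/2) ≤ |deriv (wfun u) x| := by
    rw [heq2, abs_mul]
    have : |(-(deriv u x)/2)| = |deriv u x|/2 := by
      rw [abs_div, abs_neg]; norm_num
    rw [this]
    apply mul_le_mul le_rfl ?_ (by norm_num) (by positivity)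
    rw [abs_of_pos (wpos u x)]
    exact hwlb x hx
  nlinarith [h3, hbd2]

end EstAux6

namespace EstAux7
open EstAux

lemma sqrtC_eq (τ : ℝ) (hτ0 : 0 ≤ τ) :
    Real.sqrt ((4 * Real.exp (12*π)) * τ) = 2 * Real.exp (6*π) * Real.sqrt τ := by
  have h1 : (4 : ℝ) * Real.exp (12*π) = (2 * Real.exp (6*π))^2 := by
    rw [show (12:ℝ)*π = 6*π + 6*π by ring, Real.exp_add]
    ring
  rw [h1, Real.sqrt_mul (sq_nonneg _), Real.sqrt_sq (by positivity)]

lemma exp_sub_one_le (s : ℝ) (hs : 0 ≤ s) : Real.exp s - 1 ≤ s * Real.exp s := by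
  have h1 := Real.add_one_le_exp (-s)
  have h2 : Real.exp (-s) * Real.exp s = 1 := by rw [← Real.exp_add]; simp
  nlinarith [Real.exp_pos s]

end EstAux7


theorem estimates_near_incoherent :
    ∃ C : ℝ, 0 < C ∧ ∃ τ₁ ∈ Set.Ioo (0 : ℝ) 1,
      ∀ κ : ℝ, 0 < κ → ∀ τ ∈ Set.Ioo (0 : ℝ) 1,
        ∀ (u : ℝ → ℝ) (lam : ℝ), SolvesE κ (1 - τ / κ) u lam →
          (0 ≤ lam ∧ lam ≤ C * τ) ∧
          (∀ x ∈ Set.Icc (-π) π, |dens u x - 1 / (2 * π)| ≤ 2 * Real.sqrt (C * τ)) ∧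
          (τ ≤ τ₁ → ∀ x ∈ Set.Icc (-π) π, |deriv u x| ≤ C * τ) := by
  have hπ : 0 < π := Real.pi_pos
  set C : ℝ := 4 * Real.exp (12*π) with hCdef
  have hC1 : (1:ℝ) ≤ C := by
    have := Real.one_le_exp (by positivity : (0:ℝ) ≤ 12*π)
    nlinarith
  refine ⟨C, by positivity, 1/100, ⟨by norm_num, by norm_num⟩, ?_⟩
  intro κ hκ τ hτ u lam hE
  obtain ⟨hu, heven, hu0, hupi, hunpi, heq0⟩ := hE
  obtain ⟨hτ0, hτ1⟩ := hτ
  have heq : ∀ x ∈ Set.Icc (-π) π,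
      -(deriv (deriv u) x) + (1/2) * (deriv u x)^2 + lam = τ * Vfun x := by
    intro x hx
    have h := heq0 x hx
    have h2 : κ * Vfun x * (1 - (1 - τ/κ)) = τ * Vfun x := by
      field_simp
      ring
    rw [h2] at h
    exact h
  -- basic estimates
  have hlam0 : 0 ≤ lam := EstAux3.lam_nonneg hu hτ0 hupi hunpi heq
  have hkey := EstAux2.key_identity hu hupi hunpi heq
  have hJnn : 0 ≤ ∫ x in (-π)..π, (deriv u x)^2 :=
    intervalIntegral.integral_nonneg EstAux.hle (fun x _ => sq_nonneg _)
  have hlamτ : lam ≤ τ := by nlinarith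
  have hJ : (∫ x in (-π)..π, (deriv u x)^2) ≤ 4*π*τ := by nlinarith
  have hub := EstAux4.u_bound hu hτ0 heven hu0 hJ
  have hst1 : Real.sqrt τ ≤ 1 := by
    rw [show (1:ℝ) = Real.sqrt 1 by simp]
    exact Real.sqrt_le_sqrt hτ1.le
  have hstnn : 0 ≤ Real.sqrt τ := Real.sqrt_nonneg τ
  refine ⟨⟨hlam0, by nlinarith [mul_nonneg (by linarith : (0:ℝ) ≤ C - 1) hτ0.le]⟩, ?_, ?_⟩
  · -- density estimate
    intro x hx
    have hdb := EstAux5.dens_bound hu.continuous (by positivity : (0:ℝ) ≤ 3*π*Real.sqrt τ)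
      hub x hx
    refine hdb.trans ?_
    have h2M : 2*(3*π*Real.sqrt τ) ≤ 6*π := by nlinarith
    have he1 := EstAux7.exp_sub_one_le (2*(3*π*Real.sqrt τ)) (by positivity)
    have he2 : Real.exp (2*(3*π*Real.sqrt τ)) ≤ Real.exp (6*π) := Real.exp_le_exp.mpr h2M
    have he3 : Real.exp (2*(3*π*Real.sqrt τ)) - 1 ≤ 6*π*Real.sqrt τ * Real.exp (6*π) := by
      have h := mul_le_mul_of_nonneg_left he2 (by positivity : (0:ℝ) ≤ 6*π*Real.sqrt τ)
      linarith [he1, h]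
    rw [EstAux7.sqrtC_eq τ hτ0.le]
    rw [div_le_iff₀ (by positivity)]
    nlinarith [he3, mul_nonneg (mul_nonneg hπ.le hstnn) (Real.exp_pos (6*π)).le]
  · -- gradient estimate
    intro hττ₁ x hx
    have hst : Real.sqrt τ ≤ 1/10 := by
      rw [show (1/10 : ℝ) = Real.sqrt (1/100) by
        rw [show (1/100:ℝ) = (1/10)^2 by norm_num, Real.sqrt_sq (by norm_num)]]
      exact Real.sqrt_le_sqrt hττ₁
    have hM1 : ∀ y ∈ Set.Icc (-π) π, |u y| ≤ 1 := by
      intro y hy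
      have h1 := hub y hy
      have hpi := Real.pi_lt_d2
      nlinarith
    have hg := EstAux6.grad_bound hu hτ0 hlam0 hlamτ hupi hunpi heq hM1 x hx
    have h16 : 16*π ≤ C := by
      have := Real.add_one_le_exp (12*π)
      nlinarith
    nlinarith [mul_nonneg (by linarith : (0:ℝ) ≤ C - 16*π) hτ0.le]
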